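/- arXiv:1707.03181 — 2 statements merged into one kernel-verified Lean document; each statement's English description precedes it below -/
import Mathlib

section
/- The systole of the hexagonal lattice ℤ + ℤe^{iπ/3} in ℂ equals 1, and it has exactly 6 minimal vectors: ±1, ±e^{iπ/3}, ±e^{2iπ/3}. -/
open Complex

/-- The lattice in ℂ ≅ ℝ² generated by `a` and `b`. -/
noncomputable def latticeOf (a b : ℂ) : AddSubgroup ℂ := AddSubgroup.closure {a, b}

/-- The covolume of the lattice generated by `a` and `b`:
the area of the fundamental parallelogram. -/
noncomputable def covol (a b : ℂ) : ℝ := |((starRingEnd ℂ) a * b).im|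

/-- The systole of a lattice in ℂ: the infimum of the norms of its
nonzero elements. -/
noncomputable def systole (L : AddSubgroup ℂ) : ℝ :=
  sInf {r | ∃ v ∈ L, v ≠ 0 ∧ ‖v‖ = r}

/-- A minimal vector of a lattice: a nonzero vector realizing the systole. -/
def IsMinimalVector (L : AddSubgroup ℂ) (v : ℂ) : Prop :=
  v ∈ L ∧ v ≠ 0 ∧ ‖v‖ = systole L

/-- The scaling factor (2/√3)^{1/2} making the hexagonal lattice have
covolume one. -/
noncomputable def c₀ : ℝ := Real.sqrt (2 / Real.sqrt 3)

/-- The hexagonal lattice `ℤ + ℤ e^{iπ/3}` rescaled to covolume one. -/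
noncomputable def hexLattice : AddSubgroup ℂ :=
  latticeOf c₀ (c₀ * Complex.exp (Real.pi / 3 * Complex.I))

/-- A lattice in ℂ ≅ ℝ² is hexagonal if it is the image of the rescaled
hexagonal lattice under a (linear) isometry of ℝ². -/
def IsHexagonal (L : AddSubgroup ℂ) : Prop :=
  ∃ f : ℂ ≃ₗᵢ[ℝ] ℂ, (L : Set ℂ) = f '' (hexLattice : Set ℂ)

noncomputable def ω : ℂ := Complex.exp (Real.pi / 3 * Complex.I)

lemma omega_re : ω.re = 1/2 := by
  have h : (Real.pi / 3 * Complex.I : ℂ) = (Real.pi/3 : ℝ) * Complex.I := by push_cast; ring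
  rw [ω, h, Complex.exp_ofReal_mul_I_re, Real.cos_pi_div_three]

lemma omega_im : ω.im = Real.sqrt 3 / 2 := by
  have h : (Real.pi / 3 * Complex.I : ℂ) = (Real.pi/3 : ℝ) * Complex.I := by push_cast; ring
  rw [ω, h, Complex.exp_ofReal_mul_I_im, Real.sin_pi_div_three]

lemma omega2_eq : Complex.exp (2 * Real.pi / 3 * Complex.I) = ω - 1 := by
  have h : (2 * Real.pi / 3 * Complex.I : ℂ) = (2*Real.pi/3 : ℝ) * Complex.I := by push_cast; ring
  rw [h]
  apply Complex.ext
  · rw [Complex.exp_ofReal_mul_I_re]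
    have : (2*Real.pi/3 : ℝ) = Real.pi - Real.pi/3 := by ring
    simp [this, Real.cos_pi_sub, Real.cos_pi_div_three, omega_re]
    norm_num
  · rw [Complex.exp_ofReal_mul_I_im]
    have : (2*Real.pi/3 : ℝ) = Real.pi - Real.pi/3 := by ring
    simp [this, Real.sin_pi_sub, Real.sin_pi_div_three, omega_im]

lemma norm_omega : ‖ω‖ = 1 := by
  have h : (Real.pi / 3 * Complex.I : ℂ) = (Real.pi/3 : ℝ) * Complex.I := by push_cast; ring
  rw [ω, h]
  exact Complex.norm_exp_ofReal_mul_I _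

lemma mem_lattice_iff (v : ℂ) :
    v ∈ AddSubgroup.closure {1, ω} ↔ ∃ m n : ℤ, v = m + n * ω := by
  constructor
  · intro hv
    induction hv using AddSubgroup.closure_induction with
    | mem x hx =>
      rcases hx with h | h
      · exact ⟨1, 0, by simp [h]⟩
      · exact ⟨0, 1, by simp at h; simp [h]⟩
    | zero => exact ⟨0, 0, by simp⟩
    | add x y _ _ hx hy =>
      obtain ⟨m, n, rfl⟩ := hx
      obtain ⟨m', n', rfl⟩ := hy
      exact ⟨m + m', n + n', by push_cast; ring⟩
    | neg x _ hx =>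
      obtain ⟨m, n, rfl⟩ := hx
      exact ⟨-m, -n, by push_cast; ring⟩
  · rintro ⟨m, n, rfl⟩
    have h1 : (1 : ℂ) ∈ AddSubgroup.closure {1, ω} := AddSubgroup.subset_closure (by simp)
    have h2 : ω ∈ AddSubgroup.closure {1, ω} := AddSubgroup.subset_closure (by simp)
    have := AddSubgroup.add_mem _ (AddSubgroup.zsmul_mem _ h1 m) (AddSubgroup.zsmul_mem _ h2 n)
    simpa [zsmul_eq_mul] using this

lemma norm_sq_lattice (m n : ℤ) : ‖(m : ℂ) + n * ω‖^2 = ((m^2 + m*n + n^2 : ℤ) : ℝ) := by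
  have hre : ((m : ℂ) + n * ω).re = m + n * (1/2) := by
    simp [Complex.add_re, Complex.mul_re, omega_re, omega_im]
  have him : ((m : ℂ) + n * ω).im = n * (Real.sqrt 3 / 2) := by
    simp [Complex.add_im, Complex.mul_im, omega_re, omega_im]
  rw [Complex.sq_norm, Complex.normSq_apply, hre, him]
  have h3 : Real.sqrt 3 ^ 2 = 3 := Real.sq_sqrt (by norm_num)
  push_cast
  nlinarith [h3]

lemma int_ge_one (m n : ℤ) (h : ¬(m = 0 ∧ n = 0)) : 1 ≤ m^2 + m*n + n^2 := by
  rcases lt_or_ge (m^2 + m*n + n^2) 1 with hlt | hge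
  · exfalso
    have h4 : (2*m+n)^2 + 3*n^2 ≤ 3 := by nlinarith
    have hn : n^2 ≤ 1 := by nlinarith [sq_nonneg (2*m+n)]
    have hm : m^2 ≤ 1 := by nlinarith [sq_nonneg (2*n+m), sq_nonneg n]
    have hn' : -1 ≤ n ∧ n ≤ 1 := abs_le.mp (by nlinarith [_root_.sq_abs n, abs_nonneg n] : |n| ≤ 1)
    have hm' : -1 ≤ m ∧ m ≤ 1 := abs_le.mp (by nlinarith [_root_.sq_abs m, abs_nonneg m] : |m| ≤ 1)
    obtain ⟨hn1, hn2⟩ := hn'; obtain ⟨hm1, hm2⟩ := hm'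
    interval_cases m <;> interval_cases n <;> omega
  · exact hge

lemma int_eq_one (m n : ℤ) (h : m^2 + m*n + n^2 = 1) :
    (m = 1 ∧ n = 0) ∨ (m = -1 ∧ n = 0) ∨ (m = 0 ∧ n = 1) ∨ (m = 0 ∧ n = -1) ∨
    (m = -1 ∧ n = 1) ∨ (m = 1 ∧ n = -1) := by
  have hn : n^2 ≤ 1 := by nlinarith [sq_nonneg (2*m+n)]
  have hm : m^2 ≤ 1 := by nlinarith [sq_nonneg (2*n+m)]
  have hn' : -1 ≤ n ∧ n ≤ 1 := abs_le.mp (by nlinarith [_root_.sq_abs n, abs_nonneg n] : |n| ≤ 1)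
  have hm' : -1 ≤ m ∧ m ≤ 1 := abs_le.mp (by nlinarith [_root_.sq_abs m, abs_nonneg m] : |m| ≤ 1)
  obtain ⟨hn1, hn2⟩ := hn'; obtain ⟨hm1, hm2⟩ := hm'
  interval_cases m <;> interval_cases n <;> omega




lemma mem_lat_iff (v : ℂ) : v ∈ latticeOf 1 ω ↔ ∃ m n : ℤ, v = m + n * ω :=
  mem_lattice_iff v

lemma norm_ge_one (m n : ℤ) (h : ¬(m = 0 ∧ n = 0)) : 1 ≤ ‖(m : ℂ) + n * ω‖ := by
  have h1 := norm_sq_lattice m n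
  have h2 := int_ge_one m n h
  have h3 : (1 : ℝ) ≤ ‖(m : ℂ) + n * ω‖^2 := by
    rw [h1]; exact_mod_cast h2
  nlinarith [norm_nonneg ((m : ℂ) + n * ω)]

lemma systole_hex : systole (latticeOf 1 ω) = 1 := by
  unfold systole
  apply le_antisymm
  · apply csInf_le
    · exact ⟨0, fun r hr => by obtain ⟨v, _, _, rfl⟩ := hr; exact norm_nonneg v⟩
    · exact ⟨1, (mem_lat_iff 1).mpr ⟨1, 0, by simp⟩, one_ne_zero, norm_one⟩
  · apply le_csInf
    · exact ⟨1, 1, (mem_lat_iff 1).mpr ⟨1, 0, by simp⟩, one_ne_zero, norm_one⟩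
    rintro r ⟨v, hv, hv0, rfl⟩
    obtain ⟨m, n, rfl⟩ := (mem_lat_iff v).mp hv
    apply norm_ge_one
    rintro ⟨rfl, rfl⟩
    simp at hv0

lemma norm_omega2 : ‖Complex.exp (2 * Real.pi / 3 * Complex.I)‖ = 1 := by
  have h : (2 * Real.pi / 3 * Complex.I : ℂ) = (2*Real.pi/3 : ℝ) * Complex.I := by
    push_cast; ring
  rw [h]; exact Complex.norm_exp_ofReal_mul_I _


/-- The (unrescaled) hexagonal lattice ℤ + ℤe^{iπ/3} has systole 1, and its
minimal vectors are exactly ±1, ±e^{iπ/3}, ±e^{2iπ/3}. -/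
theorem hexagonal_systole_and_minimal_vectors :
    systole (latticeOf 1 (Complex.exp (Real.pi / 3 * Complex.I))) = 1 ∧
      {v : ℂ | IsMinimalVector (latticeOf 1 (Complex.exp (Real.pi / 3 * Complex.I))) v} =
        {1, -1, Complex.exp (Real.pi / 3 * Complex.I),
          -Complex.exp (Real.pi / 3 * Complex.I),
          Complex.exp (2 * Real.pi / 3 * Complex.I),
          -Complex.exp (2 * Real.pi / 3 * Complex.I)} := by
  have hω : Complex.exp (Real.pi / 3 * Complex.I) = ω := rfl
  rw [hω]
  refine ⟨systole_hex, ?_⟩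
  ext v
  simp only [Set.mem_setOf_eq, IsMinimalVector, systole_hex, Set.mem_insert_iff,
    Set.mem_singleton_iff]
  constructor
  · rintro ⟨hv, hv0, hnorm⟩
    obtain ⟨m, n, rfl⟩ := (mem_lat_iff _).mp hv
    have hsq : ((m^2 + m*n + n^2 : ℤ) : ℝ) = 1 := by
      rw [← norm_sq_lattice m n, hnorm]; norm_num
    have hint : m^2 + m*n + n^2 = 1 := by exact_mod_cast hsq
    rcases int_eq_one m n hint with ⟨rfl, rfl⟩ | ⟨rfl, rfl⟩ | ⟨rfl, rfl⟩ | ⟨rfl, rfl⟩ |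
      ⟨rfl, rfl⟩ | ⟨rfl, rfl⟩
    · left; simp
    · right; left; simp
    · right; right; left; simp
    · right; right; right; left; push_cast; ring
    · right; right; right; right; left; rw [omega2_eq]; push_cast; ring
    · right; right; right; right; right; rw [omega2_eq]; push_cast; ring
  · rintro (rfl | rfl | rfl | rfl | rfl | rfl)
    · exact ⟨(mem_lat_iff _).mpr ⟨1, 0, by simp⟩, one_ne_zero, norm_one⟩
    · exact ⟨(mem_lat_iff _).mpr ⟨-1, 0, by push_cast; ring⟩, by norm_num, by simp⟩
    · exact ⟨(mem_lat_iff _).mpr ⟨0, 1, by simp⟩, Complex.exp_ne_zero _, norm_omega⟩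
    · exact ⟨(mem_lat_iff _).mpr ⟨0, -1, by push_cast; ring⟩,
        neg_ne_zero.mpr (Complex.exp_ne_zero _), by rw [norm_neg]; exact norm_omega⟩
    · exact ⟨(mem_lat_iff _).mpr ⟨-1, 1, by rw [omega2_eq]; push_cast; ring⟩,
        Complex.exp_ne_zero _, norm_omega2⟩
    · exact ⟨(mem_lat_iff _).mpr ⟨1, -1, by rw [omega2_eq]; push_cast; ring⟩,
        neg_ne_zero.mpr (Complex.exp_ne_zero _), by rw [norm_neg]; exact norm_omega2⟩
end

section
/- Let Λ = Λ₁ × Λ₂ be an orthogonal product of two rank-2 lattices in ℝ⁴ = ℝ² ⊕ ℝ². Then Λ has three linearly independent minimal vectors if and only if syst(Λ₁) = syst(Λ₂) and at least one of Λ₁, Λ₂ is well-rounded (i.e. its minimal vectors span ℝ²). -/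
open Complex

/-- The Euclidean norm on ℝ⁴ = ℝ² ⊕ ℝ² ≅ ℂ × ℂ (orthogonal direct sum). -/
noncomputable def norm4 (v : ℂ × ℂ) : ℝ := Real.sqrt (‖v.1‖ ^ 2 + ‖v.2‖ ^ 2)

/-- The systole of a lattice in ℝ⁴ ≅ ℂ × ℂ. -/
noncomputable def systole4 (L : AddSubgroup (ℂ × ℂ)) : ℝ :=
  sInf {r | ∃ v ∈ L, v ≠ 0 ∧ norm4 v = r}

/-- A minimal vector of a lattice in ℝ⁴ ≅ ℂ × ℂ. -/
def IsMinimalVector4 (L : AddSubgroup (ℂ × ℂ)) (v : ℂ × ℂ) : Prop :=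
  v ∈ L ∧ v ≠ 0 ∧ norm4 v = systole4 L

/-- A lattice in ℝ² ≅ ℂ is well-rounded if its minimal vectors span ℝ². -/
def WellRounded (L : AddSubgroup ℂ) : Prop :=
  Submodule.span ℝ {v | IsMinimalVector L v} = ⊤

/-! ### Auxiliary lemmas -/

section Aux

lemma mem_latticeOf {a b v : ℂ} : v ∈ latticeOf a b ↔ ∃ m n : ℤ, m • a + n • b = v :=
  AddSubgroup.mem_closure_pair

lemma left_mem_latticeOf (a b : ℂ) : a ∈ latticeOf a b :=
  AddSubgroup.subset_closure (by simp)

lemma bddBelow_normSet (L : AddSubgroup ℂ) : BddBelow {r | ∃ v ∈ L, v ≠ 0 ∧ ‖v‖ = r} := by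
  refine ⟨0, ?_⟩
  rintro r ⟨v, -, -, rfl⟩
  exact norm_nonneg v

lemma systole_le {L : AddSubgroup ℂ} {v : ℂ} (hv : v ∈ L) (h0 : v ≠ 0) : systole L ≤ ‖v‖ :=
  csInf_le (bddBelow_normSet L) ⟨v, hv, h0, rfl⟩

lemma exists_minimalVector {a b : ℂ} (h : ((starRingEnd ℂ) a * b).im ≠ 0) :
    ∃ v, IsMinimalVector (latticeOf a b) v := by
  have ha : a ≠ 0 := by rintro rfl; simp at h
  -- linear independence of a, b over ℝ
  have hab : LinearIndependent ℝ ![a, b] := by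
    rw [LinearIndependent.pair_iff]
    intro s t hst
    have ht : t = 0 := by
      have h2 : ((starRingEnd ℂ) a * (s • a + t • b)).im = 0 := by
        rw [hst, mul_zero, Complex.zero_im]
      rw [mul_add, mul_smul_comm, mul_smul_comm, Complex.add_im, Complex.smul_im,
        Complex.smul_im, ← Complex.normSq_eq_conj_mul_self, Complex.ofReal_im] at h2
      simp only [smul_eq_mul, mul_zero, zero_add] at h2
      rcases mul_eq_zero.mp h2 with h' | h'
      · exact h'
      · exact absurd h' h
    have hs : s = 0 := by
      rw [ht, zero_smul, add_zero] at hst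
      rcases smul_eq_zero.mp hst with h' | h'
      · exact h'
      · exact absurd h' ha
    exact ⟨hs, ht⟩
  have hcard : Fintype.card (Fin 2) = Module.finrank ℝ ℂ := by
    simp [Complex.finrank_real_complex]
  let B := basisOfLinearIndependentOfCardEqFinrank hab hcard
  have hB : ⇑B = ![a, b] := coe_basisOfLinearIndependentOfCardEqFinrank hab hcard
  let f : ℂ →L[ℝ] (Fin 2 → ℝ) := LinearMap.toContinuousLinearMap (B.equivFun : ℂ ≃ₗ[ℝ] _)
  set C := ‖f‖ with hCdef
  have hC0 : (0:ℝ) ≤ C := norm_nonneg f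
  have hcoord : ∀ (m n : ℤ), |(m:ℝ)| ≤ C * ‖(m • a + n • b : ℂ)‖ ∧
      |(n:ℝ)| ≤ C * ‖(m • a + n • b : ℂ)‖ := by
    intro m n
    have hval : B.equivFun (m • a + n • b) = ![(m:ℝ), (n:ℝ)] := by
      have ha' : a = B 0 := by rw [hB]; rfl
      have hb' : b = B 1 := by rw [hB]; rfl
      funext i
      rw [ha', hb']
      simp only [map_add, map_zsmul, Pi.add_apply, Pi.smul_apply, Module.Basis.equivFun_self]
      fin_cases i <;> simp
    have hnorm : ‖B.equivFun (m • a + n • b)‖ ≤ C * ‖(m • a + n • b : ℂ)‖ := by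
      have h' := f.le_opNorm (m • a + n • b)
      simpa [f, LinearMap.coe_toContinuousLinearMap'] using h'
    constructor
    · have h0 : |(m:ℝ)| = ‖B.equivFun (m • a + n • b) 0‖ := by
        rw [hval]; simp [Real.norm_eq_abs]
      rw [h0]; exact (norm_le_pi_norm _ 0).trans hnorm
    · have h0 : |(n:ℝ)| = ‖B.equivFun (m • a + n • b) 1‖ := by
        rw [hval]; simp [Real.norm_eq_abs]
      rw [h0]; exact (norm_le_pi_norm _ 1).trans hnorm
  set R := ‖a‖ with hR
  set M : ℤ := ⌈C * R⌉ with hM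
  have hfin : {v : ℂ | v ∈ latticeOf a b ∧ v ≠ 0 ∧ ‖v‖ ≤ R}.Finite := by
    apply Set.Finite.subset
      ((Set.finite_Icc ((-M, -M) : ℤ × ℤ) (M, M)).image (fun p : ℤ × ℤ => p.1 • a + p.2 • b))
    rintro v ⟨hv, -, hvR⟩
    obtain ⟨m, n, rfl⟩ := mem_latticeOf.mp hv
    refine ⟨(m, n), ?_, rfl⟩
    have hm := (hcoord m n).1
    have hn := (hcoord m n).2
    have hbound : C * ‖(m • a + n • b : ℂ)‖ ≤ (M:ℝ) :=
      le_trans (mul_le_mul_of_nonneg_left hvR hC0) (Int.le_ceil _)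
    have hmR : |(m:ℝ)| ≤ (M:ℝ) := hm.trans hbound
    have hnR : |(n:ℝ)| ≤ (M:ℝ) := hn.trans hbound
    rw [Set.mem_Icc]
    constructor
    · rw [Prod.mk_le_mk]
      constructor
      · exact_mod_cast neg_le_of_abs_le hmR
      · exact_mod_cast neg_le_of_abs_le hnR
    · rw [Prod.mk_le_mk]
      constructor
      · exact_mod_cast le_of_abs_le hmR
      · exact_mod_cast le_of_abs_le hnR
  have hne : {v : ℂ | v ∈ latticeOf a b ∧ v ≠ 0 ∧ ‖v‖ ≤ R}.Nonempty :=
    ⟨a, left_mem_latticeOf a b, ha, le_refl R⟩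
  obtain ⟨v₀, hv₀, hmin⟩ := hfin.toFinset.exists_min_image norm
    ((Set.Finite.toFinset_nonempty hfin).mpr hne)
  rw [Set.Finite.mem_toFinset] at hv₀
  obtain ⟨hv₀L, hv₀0, hv₀R⟩ := hv₀
  refine ⟨v₀, hv₀L, hv₀0, le_antisymm ?_ (systole_le hv₀L hv₀0)⟩
  refine le_csInf ⟨‖a‖, a, left_mem_latticeOf a b, ha, rfl⟩ ?_
  rintro r ⟨w, hw, hw0, rfl⟩
  by_cases hcase : ‖w‖ ≤ R
  · exact hmin w (by rw [Set.Finite.mem_toFinset]; exact ⟨hw, hw0, hcase⟩)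
  · exact le_trans hv₀R (le_of_not_ge hcase)

lemma systole_pos {L : AddSubgroup ℂ} {v : ℂ} (hv : IsMinimalVector L v) : 0 < systole L := by
  rw [← hv.2.2]
  exact norm_pos_iff.mpr hv.2.1

lemma norm4_nonneg (v : ℂ × ℂ) : 0 ≤ norm4 v := Real.sqrt_nonneg _

lemma norm4_eq_fst {v : ℂ × ℂ} (h : v.2 = 0) : norm4 v = ‖v.1‖ := by
  unfold norm4
  rw [h]
  simp [Real.sqrt_sq, norm_nonneg]

lemma norm4_eq_snd {v : ℂ × ℂ} (h : v.1 = 0) : norm4 v = ‖v.2‖ := by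
  unfold norm4
  rw [h]
  simp [Real.sqrt_sq, norm_nonneg]

lemma norm4_fst_le (v : ℂ × ℂ) : ‖v.1‖ ≤ norm4 v := by
  have h := Real.sqrt_le_sqrt (show ‖v.1‖^2 ≤ ‖v.1‖^2 + ‖v.2‖^2 by nlinarith [sq_nonneg ‖v.2‖])
  calc ‖v.1‖ = Real.sqrt (‖v.1‖^2) := (Real.sqrt_sq (norm_nonneg _)).symm
    _ ≤ norm4 v := h

lemma norm4_snd_le (v : ℂ × ℂ) : ‖v.2‖ ≤ norm4 v := by
  have h := Real.sqrt_le_sqrt (show ‖v.2‖^2 ≤ ‖v.1‖^2 + ‖v.2‖^2 by nlinarith [sq_nonneg ‖v.1‖])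
  calc ‖v.2‖ = Real.sqrt (‖v.2‖^2) := (Real.sqrt_sq (norm_nonneg _)).symm
    _ ≤ norm4 v := h

lemma systole4_prod {L₁ L₂ : AddSubgroup ℂ} {u w : ℂ}
    (hu : IsMinimalVector L₁ u) (hw : IsMinimalVector L₂ w) :
    systole4 (L₁.prod L₂) = min (systole L₁) (systole L₂) := by
  have hbdd : BddBelow {r | ∃ v ∈ L₁.prod L₂, v ≠ 0 ∧ norm4 v = r} := by
    refine ⟨0, ?_⟩
    rintro r ⟨v, -, -, rfl⟩
    exact norm4_nonneg v
  have hmem : min (systole L₁) (systole L₂) ∈ {r | ∃ v ∈ L₁.prod L₂, v ≠ 0 ∧ norm4 v = r} := by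
    rcases le_total (systole L₁) (systole L₂) with hle | hle
    · refine ⟨(u, 0), AddSubgroup.mem_prod.mpr ⟨hu.1, zero_mem _⟩, ?_, ?_⟩
      · simp [Prod.ext_iff, hu.2.1]
      · rw [norm4_eq_fst rfl]
        simp only
        rw [hu.2.2, min_eq_left hle]
    · refine ⟨(0, w), AddSubgroup.mem_prod.mpr ⟨zero_mem _, hw.1⟩, ?_, ?_⟩
      · simp [Prod.ext_iff, hw.2.1]
      · rw [norm4_eq_snd rfl]
        simp only
        rw [hw.2.2, min_eq_right hle]
  apply le_antisymm (csInf_le hbdd hmem)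
  apply le_csInf ⟨_, hmem⟩
  rintro r ⟨⟨x, y⟩, hv, hv0, rfl⟩
  rw [AddSubgroup.mem_prod] at hv
  by_cases hx : x = 0
  · have hy : y ≠ 0 := by
      rintro rfl
      exact hv0 (by rw [hx]; rfl)
    calc min (systole L₁) (systole L₂) ≤ systole L₂ := min_le_right _ _
      _ ≤ ‖y‖ := systole_le hv.2 hy
      _ ≤ norm4 (x, y) := norm4_snd_le (x, y)
  · calc min (systole L₁) (systole L₂) ≤ systole L₁ := min_le_left _ _
      _ ≤ ‖x‖ := systole_le hv.1 hx
      _ ≤ norm4 (x, y) := norm4_fst_le (x, y)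

lemma min4_fst {L₁ L₂ : AddSubgroup ℂ} {u w : ℂ}
    (hu : IsMinimalVector L₁ u) (hw : IsMinimalVector L₂ w)
    {v : ℂ × ℂ} (hv : IsMinimalVector4 (L₁.prod L₂) v) (h2 : v.2 = 0) :
    IsMinimalVector L₁ v.1 ∧ systole L₁ ≤ systole L₂ := by
  obtain ⟨hvm, hv0, hvs⟩ := hv
  rw [AddSubgroup.mem_prod] at hvm
  have hv1 : v.1 ≠ 0 := by
    intro h1
    exact hv0 (Prod.ext_iff.mpr ⟨h1, h2⟩)
  have hmin : ‖v.1‖ = min (systole L₁) (systole L₂) := by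
    rw [← norm4_eq_fst h2, hvs, systole4_prod hu hw]
  have hle1 : systole L₁ ≤ ‖v.1‖ := systole_le hvm.1 hv1
  have heq : ‖v.1‖ = systole L₁ := le_antisymm (hmin.le.trans (min_le_left _ _)) hle1
  have hle : systole L₁ ≤ systole L₂ := min_eq_left_iff.mp (hmin.symm.trans heq)
  exact ⟨⟨hvm.1, hv1, heq⟩, hle⟩

lemma min4_snd {L₁ L₂ : AddSubgroup ℂ} {u w : ℂ}
    (hu : IsMinimalVector L₁ u) (hw : IsMinimalVector L₂ w)
    {v : ℂ × ℂ} (hv : IsMinimalVector4 (L₁.prod L₂) v) (h1 : v.1 = 0) :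
    IsMinimalVector L₂ v.2 ∧ systole L₂ ≤ systole L₁ := by
  obtain ⟨hvm, hv0, hvs⟩ := hv
  rw [AddSubgroup.mem_prod] at hvm
  have hv2 : v.2 ≠ 0 := by
    intro h2
    exact hv0 (Prod.ext_iff.mpr ⟨h1, h2⟩)
  have hmin : ‖v.2‖ = min (systole L₁) (systole L₂) := by
    rw [← norm4_eq_snd h1, hvs, systole4_prod hu hw]
  have hle1 : systole L₂ ≤ ‖v.2‖ := systole_le hvm.2 hv2
  have heq : ‖v.2‖ = systole L₂ := le_antisymm (hmin.le.trans (min_le_right _ _)) hle1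
  have hle : systole L₂ ≤ systole L₁ := min_eq_right_iff.mp (hmin.symm.trans heq)
  exact ⟨⟨hvm.2, hv2, heq⟩, hle⟩

lemma min4_comp_zero {L₁ L₂ : AddSubgroup ℂ} {u w : ℂ}
    (hu : IsMinimalVector L₁ u) (hw : IsMinimalVector L₂ w)
    {v : ℂ × ℂ} (hv : IsMinimalVector4 (L₁.prod L₂) v) :
    v.2 = 0 ∨ v.1 = 0 := by
  by_contra hc
  push_neg at hc
  obtain ⟨h2, h1⟩ := hc
  obtain ⟨hvm, hv0, hvs⟩ := hv
  rw [AddSubgroup.mem_prod] at hvm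
  have hs1 : systole L₁ ≤ ‖v.1‖ := systole_le hvm.1 h1
  have hs2 : systole L₂ ≤ ‖v.2‖ := systole_le hvm.2 h2
  have hp1 : 0 < systole L₁ := systole_pos hu
  have hp2 : 0 < systole L₂ := systole_pos hw
  have hminv : norm4 v = min (systole L₁) (systole L₂) := by
    rw [hvs, systole4_prod hu hw]
  have hsq : (norm4 v)^2 = ‖v.1‖^2 + ‖v.2‖^2 := Real.sq_sqrt (by positivity)
  have hm : 0 < min (systole L₁) (systole L₂) := lt_min hp1 hp2
  have h1' : min (systole L₁) (systole L₂) ≤ ‖v.1‖ := (min_le_left _ _).trans hs1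
  have h2' : min (systole L₁) (systole L₂) ≤ ‖v.2‖ := (min_le_right _ _).trans hs2
  nlinarith [h1', h2', hm, hsq, hminv]

lemma min4_of_fst {L₁ L₂ : AddSubgroup ℂ} {u w x : ℂ}
    (hu : IsMinimalVector L₁ u) (hw : IsMinimalVector L₂ w)
    (hx : IsMinimalVector L₁ x) (hle : systole L₁ ≤ systole L₂) :
    IsMinimalVector4 (L₁.prod L₂) (x, 0) := by
  refine ⟨AddSubgroup.mem_prod.mpr ⟨hx.1, zero_mem _⟩, ?_, ?_⟩
  · simp [Prod.ext_iff, hx.2.1]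
  · rw [norm4_eq_fst rfl]
    simp only
    rw [hx.2.2, systole4_prod hu hw, min_eq_left hle]

lemma min4_of_snd {L₁ L₂ : AddSubgroup ℂ} {u w x : ℂ}
    (hu : IsMinimalVector L₁ u) (hw : IsMinimalVector L₂ w)
    (hx : IsMinimalVector L₂ x) (hle : systole L₂ ≤ systole L₁) :
    IsMinimalVector4 (L₁.prod L₂) (0, x) := by
  refine ⟨AddSubgroup.mem_prod.mpr ⟨zero_mem _, hx.1⟩, ?_, ?_⟩
  · simp [Prod.ext_iff, hx.2.1]
  · rw [norm4_eq_snd rfl]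
    simp only
    rw [hx.2.2, systole4_prod hu hw, min_eq_right hle]

lemma wellRounded_of_pair {L : AddSubgroup ℂ} {x y : ℂ}
    (hx : IsMinimalVector L x) (hy : IsMinimalVector L y)
    (h : LinearIndependent ℝ ![x, y]) : WellRounded L := by
  have hcard : Fintype.card (Fin 2) = Module.finrank ℝ ℂ := by
    simp [Complex.finrank_real_complex]
  have htop := h.span_eq_top_of_card_eq_finrank hcard
  rw [WellRounded, eq_top_iff, ← htop]
  apply Submodule.span_mono
  rintro z ⟨i, rfl⟩
  fin_cases i
  · exact hx
  · exact hy

lemma exists_pair_of_wellRounded {L : AddSubgroup ℂ} (h : WellRounded L) :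
    ∃ x y, IsMinimalVector L x ∧ IsMinimalVector L y ∧ LinearIndependent ℝ ![x, y] := by
  rw [WellRounded] at h
  have hne : {v | IsMinimalVector L v}.Nonempty := by
    by_contra hc
    rw [Set.not_nonempty_iff_eq_empty] at hc
    rw [hc, Submodule.span_empty] at h
    have h1 : (1:ℂ) ∈ (⊥ : Submodule ℝ ℂ) := by rw [h]; trivial
    simp at h1
  obtain ⟨x, hx⟩ := hne
  by_cases hy : ∃ y ∈ {v | IsMinimalVector L v}, y ∉ Submodule.span ℝ {x}
  · obtain ⟨y, hyS, hyx⟩ := hy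
    refine ⟨y, x, hyS, hx, ?_⟩
    rw [linearIndependent_fin2]
    constructor
    · simpa using hx.2.1
    · intro t ht
      simp only [Matrix.cons_val_one, Matrix.head_cons, Matrix.cons_val_zero] at ht
      exact hyx (Submodule.mem_span_singleton.mpr ⟨t, ht⟩)
  · push_neg at hy
    exfalso
    have hle : Submodule.span ℝ {v | IsMinimalVector L v} ≤ Submodule.span ℝ {x} :=
      Submodule.span_le.mpr (fun y hyS => hy y hyS)
    rw [h] at hle
    have h1 : Submodule.span ℝ ({x} : Set ℂ) = ⊤ := top_unique hle
    have h2 : Module.finrank ℝ (Submodule.span ℝ ({x} : Set ℂ)) = 1 :=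
      finrank_span_singleton hx.2.1
    rw [h1, finrank_top, Complex.finrank_real_complex] at h2
    omega

lemma indep3_fst {x y z : ℂ} (hxy : LinearIndependent ℝ ![x, y]) (hz : z ≠ 0) :
    LinearIndependent ℝ ![((x, 0) : ℂ × ℂ), (y, 0), (0, z)] := by
  rw [Fintype.linearIndependent_iff]
  intro g hg
  rw [Fin.sum_univ_three] at hg
  simp only [Matrix.cons_val_zero, Matrix.cons_val_one, Matrix.head_cons, Matrix.cons_val_two,
    Matrix.tail_cons, Prod.ext_iff, Prod.smul_mk, Prod.mk_add_mk, Prod.fst_zero, Prod.snd_zero,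
    smul_zero, add_zero, zero_add] at hg
  obtain ⟨hfst, hsnd⟩ := hg
  obtain ⟨hg0, hg1⟩ := LinearIndependent.pair_iff.mp hxy (g 0) (g 1) hfst
  have hg2 : g 2 = 0 := by
    rcases smul_eq_zero.mp hsnd with h' | h'
    · exact h'
    · exact absurd h' hz
  intro i
  fin_cases i
  · exact hg0
  · exact hg1
  · exact hg2

lemma indep3_snd {x y z : ℂ} (hxy : LinearIndependent ℝ ![x, y]) (hz : z ≠ 0) :
    LinearIndependent ℝ ![((0, x) : ℂ × ℂ), (0, y), (z, 0)] := by
  rw [Fintype.linearIndependent_iff]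
  intro g hg
  rw [Fin.sum_univ_three] at hg
  simp only [Matrix.cons_val_zero, Matrix.cons_val_one, Matrix.head_cons, Matrix.cons_val_two,
    Matrix.tail_cons, Prod.ext_iff, Prod.smul_mk, Prod.mk_add_mk, Prod.fst_zero, Prod.snd_zero,
    smul_zero, add_zero, zero_add] at hg
  obtain ⟨hfst, hsnd⟩ := hg
  obtain ⟨hg0, hg1⟩ := LinearIndependent.pair_iff.mp hxy (g 0) (g 1) hsnd
  have hg2 : g 2 = 0 := by
    rcases smul_eq_zero.mp hfst with h' | h'
    · exact h'
    · exact absurd h' hz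
  intro i
  fin_cases i
  · exact hg0
  · exact hg1
  · exact hg2

lemma triple_pair {V : Type*} [AddCommGroup V] [Module ℝ V] {v₁ v₂ v₃ : V}
    (h : LinearIndependent ℝ ![v₁, v₂, v₃]) {i j : Fin 3} (hij : i ≠ j) :
    LinearIndependent ℝ ![![v₁, v₂, v₃] i, ![v₁, v₂, v₃] j] := by
  have hinj : Function.Injective ![i, j] := by
    intro p q hpq
    fin_cases p <;> fin_cases q <;> simp_all
  have h2 := h.comp ![i, j] hinj
  have he : ![v₁, v₂, v₃] ∘ ![i, j] = ![![v₁, v₂, v₃] i, ![v₁, v₂, v₃] j] := by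
    funext k
    fin_cases k <;> rfl
  rwa [he] at h2

lemma not_indep3_of_mem {p : Submodule ℝ (ℂ × ℂ)} (hp : Module.finrank ℝ p = 2)
    {v₁ v₂ v₃ : ℂ × ℂ} (h1 : v₁ ∈ p) (h2 : v₂ ∈ p) (h3 : v₃ ∈ p) :
    ¬ LinearIndependent ℝ ![v₁, v₂, v₃] := by
  intro h
  have hmem : ∀ i, ![v₁, v₂, v₃] i ∈ p := by
    intro i
    fin_cases i <;> assumption
  have hu : LinearIndependent ℝ (fun i => (⟨![v₁, v₂, v₃] i, hmem i⟩ : p)) := by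
    apply LinearIndependent.of_comp p.subtype
    convert h using 1
    funext i
    rfl
  have hcard := hu.fintype_card_le_finrank
  rw [hp, Fintype.card_fin] at hcard
  omega

lemma finrank_inl : Module.finrank ℝ (LinearMap.range (LinearMap.inl ℝ ℂ ℂ)) = 2 := by
  rw [LinearMap.finrank_range_of_inj LinearMap.inl_injective, Complex.finrank_real_complex]

lemma finrank_inr : Module.finrank ℝ (LinearMap.range (LinearMap.inr ℝ ℂ ℂ)) = 2 := by
  rw [LinearMap.finrank_range_of_inj LinearMap.inr_injective, Complex.finrank_real_complex]

lemma mem_inl {v : ℂ × ℂ} (h : v.2 = 0) : v ∈ LinearMap.range (LinearMap.inl ℝ ℂ ℂ) :=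
  ⟨v.1, Prod.ext_iff.mpr ⟨rfl, h.symm⟩⟩

lemma mem_inr {v : ℂ × ℂ} (h : v.1 = 0) : v ∈ LinearMap.range (LinearMap.inr ℝ ℂ ℂ) :=
  ⟨v.2, Prod.ext_iff.mpr ⟨h.symm, rfl⟩⟩

lemma forward_core {L₁ L₂ : AddSubgroup ℂ} {u w : ℂ}
    (hu : IsMinimalVector L₁ u) (hw : IsMinimalVector L₂ w)
    {p q r : ℂ × ℂ}
    (hp : IsMinimalVector4 (L₁.prod L₂) p) (hq : IsMinimalVector4 (L₁.prod L₂) q)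
    (hr : IsMinimalVector4 (L₁.prod L₂) r)
    (hp2 : p.2 = 0) (hq2 : q.2 = 0) (hr1 : r.1 = 0)
    (hpq : LinearIndependent ℝ ![p, q]) :
    systole L₁ = systole L₂ ∧ WellRounded L₁ := by
  obtain ⟨hpmin, hle₁⟩ := min4_fst hu hw hp hp2
  obtain ⟨hqmin, -⟩ := min4_fst hu hw hq hq2
  obtain ⟨-, hle₂⟩ := min4_snd hu hw hr hr1
  refine ⟨le_antisymm hle₁ hle₂, ?_⟩
  apply wellRounded_of_pair hpmin hqmin
  rw [LinearIndependent.pair_iff] at hpq ⊢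
  intro s t hst
  apply hpq s t
  rw [Prod.ext_iff]
  constructor
  · simpa using hst
  · simp [hp2, hq2]

lemma forward_core' {L₁ L₂ : AddSubgroup ℂ} {u w : ℂ}
    (hu : IsMinimalVector L₁ u) (hw : IsMinimalVector L₂ w)
    {p q r : ℂ × ℂ}
    (hp : IsMinimalVector4 (L₁.prod L₂) p) (hq : IsMinimalVector4 (L₁.prod L₂) q)
    (hr : IsMinimalVector4 (L₁.prod L₂) r)
    (hp1 : p.1 = 0) (hq1 : q.1 = 0) (hr2 : r.2 = 0)
    (hpq : LinearIndependent ℝ ![p, q]) :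
    systole L₁ = systole L₂ ∧ WellRounded L₂ := by
  obtain ⟨hpmin, hle₂⟩ := min4_snd hu hw hp hp1
  obtain ⟨hqmin, -⟩ := min4_snd hu hw hq hq1
  obtain ⟨-, hle₁⟩ := min4_fst hu hw hr hr2
  refine ⟨le_antisymm hle₁ hle₂, ?_⟩
  apply wellRounded_of_pair hpmin hqmin
  rw [LinearIndependent.pair_iff] at hpq ⊢
  intro s t hst
  apply hpq s t
  rw [Prod.ext_iff]
  constructor
  · simp [hp1, hq1]
  · simpa using hst

end Aux

/-- An orthogonal product Λ₁ × Λ₂ of two rank-2 lattices in ℝ⁴ = ℝ² ⊕ ℝ² has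
three linearly independent minimal vectors if and only if
syst(Λ₁) = syst(Λ₂) and at least one of Λ₁, Λ₂ is well-rounded. -/
theorem three_independent_minimal_vectors_iff (a b c d : ℂ)
    (h₁ : ((starRingEnd ℂ) a * b).im ≠ 0) (h₂ : ((starRingEnd ℂ) c * d).im ≠ 0) :
    (∃ v₁ v₂ v₃ : ℂ × ℂ,
        IsMinimalVector4 ((latticeOf a b).prod (latticeOf c d)) v₁ ∧
        IsMinimalVector4 ((latticeOf a b).prod (latticeOf c d)) v₂ ∧
        IsMinimalVector4 ((latticeOf a b).prod (latticeOf c d)) v₃ ∧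
        LinearIndependent ℝ ![v₁, v₂, v₃]) ↔
      systole (latticeOf a b) = systole (latticeOf c d) ∧
        (WellRounded (latticeOf a b) ∨ WellRounded (latticeOf c d)) := by
  obtain ⟨u, hu⟩ := exists_minimalVector h₁
  obtain ⟨w, hw⟩ := exists_minimalVector h₂
  constructor
  · rintro ⟨v₁, v₂, v₃, hv₁, hv₂, hv₃, hind⟩
    have hpair01 : LinearIndependent ℝ ![v₁, v₂] := by
      have := triple_pair hind (i := 0) (j := 1) (by decide)
      simpa using this
    have hpair02 : LinearIndependent ℝ ![v₁, v₃] := by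
      have := triple_pair hind (i := 0) (j := 2) (by decide)
      simpa using this
    have hpair12 : LinearIndependent ℝ ![v₂, v₃] := by
      have := triple_pair hind (i := 1) (j := 2) (by decide)
      simpa using this
    rcases min4_comp_zero hu hw hv₁ with c₁ | c₁ <;>
      rcases min4_comp_zero hu hw hv₂ with c₂ | c₂ <;>
      rcases min4_comp_zero hu hw hv₃ with c₃ | c₃
    · exact absurd hind (not_indep3_of_mem finrank_inl (mem_inl c₁) (mem_inl c₂) (mem_inl c₃))
    · obtain ⟨he, hwr⟩ := forward_core hu hw hv₁ hv₂ hv₃ c₁ c₂ c₃ hpair01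
      exact ⟨he, Or.inl hwr⟩
    · obtain ⟨he, hwr⟩ := forward_core hu hw hv₁ hv₃ hv₂ c₁ c₃ c₂ hpair02
      exact ⟨he, Or.inl hwr⟩
    · obtain ⟨he, hwr⟩ := forward_core' hu hw hv₂ hv₃ hv₁ c₂ c₃ c₁ hpair12
      exact ⟨he, Or.inr hwr⟩
    · obtain ⟨he, hwr⟩ := forward_core hu hw hv₂ hv₃ hv₁ c₂ c₃ c₁ hpair12
      exact ⟨he, Or.inl hwr⟩
    · obtain ⟨he, hwr⟩ := forward_core' hu hw hv₁ hv₃ hv₂ c₁ c₃ c₂ hpair02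
      exact ⟨he, Or.inr hwr⟩
    · obtain ⟨he, hwr⟩ := forward_core' hu hw hv₁ hv₂ hv₃ c₁ c₂ c₃ hpair01
      exact ⟨he, Or.inr hwr⟩
    · exact absurd hind (not_indep3_of_mem finrank_inr (mem_inr c₁) (mem_inr c₂) (mem_inr c₃))
  · rintro ⟨heq, hwr | hwr⟩
    · obtain ⟨x, y, hx, hy, hxy⟩ := exists_pair_of_wellRounded hwr
      exact ⟨(x, 0), (y, 0), (0, w), min4_of_fst hu hw hx heq.le, min4_of_fst hu hw hy heq.le,
        min4_of_snd hu hw hw heq.ge, indep3_fst hxy hw.2.1⟩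
    · obtain ⟨x, y, hx, hy, hxy⟩ := exists_pair_of_wellRounded hwr
      exact ⟨(0, x), (0, y), (u, 0), min4_of_snd hu hw hx heq.ge, min4_of_snd hu hw hy heq.ge,
        min4_of_fst hu hw hu heq.le, indep3_snd hxy hu.2.1⟩
end
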